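/- Let A(t) = ∑_{n=0}^∞ a_n t^n be a real power series. Suppose A(t) = H(t)/(1 - c t) where c is a nonzero real constant and H is a power series whose radius of convergence is strictly greater than |c|⁻¹. Then lim_{n→∞} a_n / c^n exists and equals H(c⁻¹). -/

import Mathlib

open Filter Topology

/-- If `A(t) = ∑ aₙ tⁿ` satisfies `A(t)(1 - c t) = H(t)` as formal power
series (with `c ≠ 0`), and `H` has radius of convergence strictly greater than `|c|⁻¹`
(witnessed by absolute summability at some `r > |c|⁻¹`), then `aₙ / cⁿ → H(c⁻¹)`. -/
theorem stmt0 (a H : ℕ → ℝ) (c : ℝ) (hc : c ≠ 0)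
    (hdiv : ∀ n : ℕ, (a n - c * (if n = 0 then 0 else a (n - 1))) = H n)
    (r : ℝ) (hr : r > |c|⁻¹) (hH : Summable fun n => |H n| * r ^ n) :
    Tendsto (fun n => a n / c ^ n) atTop (𝓝 (∑' n : ℕ, H n * (c⁻¹) ^ n)) := by
  have key : ∀ n, a n / c ^ n = ∑ k ∈ Finset.range (n + 1), H k * (c⁻¹) ^ k := by
    intro n
    induction n with
    | zero =>
      have h := hdiv 0
      simp at h
      simp [h]
    | succ n ih =>
      have h := hdiv (n + 1)
      simp only [Nat.succ_ne_zero, if_false, Nat.add_sub_cancel] at h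
      have ha : a (n + 1) = c * a n + H (n + 1) := by linarith
      rw [Finset.sum_range_succ, ← ih, ha]
      have hcp : c ^ n ≠ 0 := pow_ne_zero _ hc
      rw [inv_pow]
      field_simp
      ring
  have hsum : Summable (fun n => H n * (c⁻¹) ^ n) := by
    apply Summable.of_norm
    apply hH.of_nonneg_of_le (fun n => norm_nonneg _)
    intro n
    have h1 : ‖H n * (c⁻¹) ^ n‖ = |H n| * |c|⁻¹ ^ n := by
      rw [norm_mul, norm_pow, Real.norm_eq_abs, Real.norm_eq_abs, abs_inv]
    rw [h1]
    exact mul_le_mul_of_nonneg_left (pow_le_pow_left₀ (by positivity) hr.le n) (abs_nonneg _)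
  have := hsum.hasSum.tendsto_sum_nat.comp (tendsto_add_atTop_nat 1)
  refine this.congr fun n => ?_
  exact (key n).symm
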